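/- arXiv:0908.0660 — 2 statements merged into one kernel-verified Lean document; each statement's English description precedes it below -/
import Mathlib

section
/- Let Φ ∈ ℝ^{m×n}, let T ⊆ {1,…,n} with #T = s, and let k ≥ 1. Assume Φ satisfies the RIP of order s+2k with radius δ ∈ (0, √2 − 1). Let x ∈ ℝⁿ, ε ≥ 0, y = Φx + n with ‖n‖₂ ≤ ε, and let x* solve iBPDN. Set r = x − x_T and let T₀ be a set of k largest-magnitude entries of r. Then ‖x − x*‖₂ ≤ C·ε + D·k^{−1/2}‖r − r_{T₀}‖₁, where C = 4√(1+δ)/(1 − δ − √2·δ) and D = 2(1 + √2·δ − δ)/(1 − δ − √2·δ). (In particular, Φ also satisfies the RIP of order 2k with radius δ, and δ² + 2δ < 1, so the stability condition δ_{2k}² + 2δ_{s+2k} < 1 holds with δ_{2k} = δ_{s+2k} = δ.) -/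
open scoped BigOperators

/-- The Euclidean (ℓ₂) norm of a vector. -/
noncomputable def l2 {d : ℕ} (u : Fin d → ℝ) : ℝ := Real.sqrt (∑ i, (u i) ^ 2)

/-- The ℓ₁ norm of a vector. -/
noncomputable def l1 {d : ℕ} (u : Fin d → ℝ) : ℝ := ∑ i, |u i|

/-- `restr S u` equals `u` on `S` and `0` outside `S`. -/
def restr {n : ℕ} (S : Finset (Fin n)) (u : Fin n → ℝ) : Fin n → ℝ :=
  fun i => if i ∈ S then u i else 0

/-- Restricted Isometry Property of order `q` with radius `δ`. -/
def RIP {m n : ℕ} (Φ : Matrix (Fin m) (Fin n) ℝ) (q : ℕ) (δ : ℝ) : Prop :=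
  ∀ u : Fin n → ℝ, (Function.support u).ncard ≤ q →
    (1 - δ) * (l2 u) ^ 2 ≤ (l2 (Φ.mulVec u)) ^ 2 ∧
    (l2 (Φ.mulVec u)) ^ 2 ≤ (1 + δ) * (l2 u) ^ 2

/-- `xs` solves the innovative Basis Pursuit DeNoise program. -/
def solvesIBPDN {m n : ℕ} (Φ : Matrix (Fin m) (Fin n) ℝ) (y : Fin m → ℝ) (ε : ℝ)
    (T : Finset (Fin n)) (xs : Fin n → ℝ) : Prop :=
  l2 (y - Φ.mulVec xs) ≤ ε ∧
  ∀ u : Fin n → ℝ, l2 (y - Φ.mulVec u) ≤ ε → l1 (restr Tᶜ xs) ≤ l1 (restr Tᶜ u)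

/-- `S` is a set of largest-magnitude entries of `r`. -/
def isLargest {n : ℕ} (r : Fin n → ℝ) (S : Finset (Fin n)) : Prop :=
  ∀ i ∈ S, ∀ j ∉ S, |r j| ≤ |r i|

noncomputable def dotp {d : ℕ} (u v : Fin d → ℝ) : ℝ := ∑ i, u i * v i

lemma l2_nonneg {d : ℕ} (u : Fin d → ℝ) : 0 ≤ l2 u := Real.sqrt_nonneg _

lemma sq_l2 {d : ℕ} (u : Fin d → ℝ) : (l2 u)^2 = ∑ i, (u i)^2 :=
  Real.sq_sqrt (by positivity)

lemma le_of_sq_le_sq' {a c : ℝ} (h : a^2 ≤ c^2) (ha : 0 ≤ a) (hc : 0 ≤ c) : a ≤ c := by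
  nlinarith

lemma dotp_self {d : ℕ} (u : Fin d → ℝ) : dotp u u = (l2 u)^2 := by
  rw [sq_l2]; simp [dotp, sq]

lemma abs_dotp_le {d : ℕ} (u v : Fin d → ℝ) : |dotp u v| ≤ l2 u * l2 v := by
  have h1 : |dotp u v| ≤ ∑ i, |u i| * |v i| := by
    refine (Finset.abs_sum_le_sum_abs _ _).trans ?_
    simp [abs_mul, le_refl]
  refine h1.trans ?_
  have := Real.sum_mul_le_sqrt_mul_sqrt Finset.univ (fun i => |u i|) (fun i => |v i|)
  simpa [l2, sq_abs] using this

lemma sq_l2_add {d : ℕ} (u v : Fin d → ℝ) :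
    (l2 (u + v))^2 = (l2 u)^2 + 2 * dotp u v + (l2 v)^2 := by
  simp only [sq_l2, dotp, Pi.add_apply, Finset.mul_sum, ← Finset.sum_add_distrib]
  exact Finset.sum_congr rfl (fun i _ => by ring)

lemma l2_add_le {d : ℕ} (u v : Fin d → ℝ) : l2 (u + v) ≤ l2 u + l2 v := by
  refine le_of_sq_le_sq' ?_ (l2_nonneg _) (by have := l2_nonneg u; have := l2_nonneg v; linarith)
  rw [sq_l2_add]
  have := (abs_dotp_le u v)
  nlinarith [l2_nonneg u, l2_nonneg v, abs_le.mp (abs_dotp_le u v)]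

lemma l2_neg {d : ℕ} (u : Fin d → ℝ) : l2 (-u) = l2 u := by simp [l2]

lemma l2_sub_le {d : ℕ} (u v : Fin d → ℝ) : l2 (u - v) ≤ l2 u + l2 v := by
  rw [sub_eq_add_neg]
  exact (l2_add_le u (-v)).trans (by rw [l2_neg])

lemma l2_sum_le {d : ℕ} {ι : Type*} (S : Finset ι) (f : ι → Fin d → ℝ) :
    l2 (∑ j ∈ S, f j) ≤ ∑ j ∈ S, l2 (f j) := by
  classical
  induction S using Finset.cons_induction with
  | empty => simp [l2]
  | cons a S ha ih =>
      rw [Finset.sum_cons, Finset.sum_cons]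
      exact (l2_add_le _ _).trans (by linarith)

lemma dotp_add_left {d : ℕ} (u v w : Fin d → ℝ) :
    dotp (u + v) w = dotp u w + dotp v w := by
  simp only [dotp, Pi.add_apply, ← Finset.sum_add_distrib]
  exact Finset.sum_congr rfl (fun i _ => by ring)

lemma dotp_sum_right {d : ℕ} {ι : Type*} (S : Finset ι) (u : Fin d → ℝ) (f : ι → Fin d → ℝ) :
    dotp u (∑ j ∈ S, f j) = ∑ j ∈ S, dotp u (f j) := by
  simp only [dotp, Finset.sum_apply, Finset.mul_sum]
  exact Finset.sum_comm

lemma support_restr {n : ℕ} (S : Finset (Fin n)) (u : Fin n → ℝ) :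
    Function.support (restr S u) ⊆ ↑S := by
  intro i hi
  simp only [Function.mem_support, restr] at hi
  by_contra h
  rw [Finset.mem_coe] at h
  simp [h] at hi

lemma ncard_support_restr {n : ℕ} (S : Finset (Fin n)) (u : Fin n → ℝ) :
    (Function.support (restr S u)).ncard ≤ S.card := by
  have := Set.ncard_le_ncard (support_restr S u) (S.finite_toSet)
  simpa [Set.ncard_coe_finset] using this

lemma sq_l2_restr {n : ℕ} (S : Finset (Fin n)) (u : Fin n → ℝ) :
    (l2 (restr S u))^2 = ∑ i ∈ S, (u i)^2 := by
  rw [sq_l2]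
  simp only [restr, apply_ite (· ^ (2:ℕ)), zero_pow, OfNat.ofNat_ne_zero, ne_eq,
    not_false_iff]
  rw [Finset.sum_ite_mem, Finset.univ_inter]

lemma l1_restr {n : ℕ} (S : Finset (Fin n)) (u : Fin n → ℝ) :
    l1 (restr S u) = ∑ i ∈ S, |u i| := by
  simp only [l1, restr, apply_ite abs, abs_zero]
  rw [Finset.sum_ite_mem, Finset.univ_inter]

lemma l2_restr_mono {n : ℕ} {S S' : Finset (Fin n)} (h : S ⊆ S') (u : Fin n → ℝ) :
    l2 (restr S u) ≤ l2 (restr S' u) := by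
  refine le_of_sq_le_sq' ?_ (l2_nonneg _) (l2_nonneg _)
  rw [sq_l2_restr, sq_l2_restr]
  exact Finset.sum_le_sum_of_subset_of_nonneg h (fun i _ _ => sq_nonneg _)

lemma l2_restr_eq_sqrt {n : ℕ} (S : Finset (Fin n)) (u : Fin n → ℝ) :
    l2 (restr S u) = Real.sqrt (∑ i ∈ S, (u i)^2) := by
  rw [← sq_l2_restr, Real.sqrt_sq (l2_nonneg _)]

lemma l1_le_sqrt_card_l2 {n : ℕ} (S : Finset (Fin n)) (u : Fin n → ℝ) :
    ∑ i ∈ S, |u i| ≤ Real.sqrt S.card * l2 (restr S u) := by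
  have := Real.sum_mul_le_sqrt_mul_sqrt S (fun i => |u i|) (fun _ => (1:ℝ))
  simp only [mul_one, one_pow, sq_abs, Finset.sum_const, nsmul_eq_mul] at this
  rw [l2_restr_eq_sqrt, mul_comm]
  exact this.trans (le_of_eq (by norm_num))

lemma l2_eq_zero_iff {d : ℕ} {u : Fin d → ℝ} : l2 u = 0 ↔ u = 0 := by
  constructor
  · intro h
    rw [l2, Real.sqrt_eq_zero (by positivity)] at h
    funext i
    have h2 := (Finset.sum_eq_zero_iff_of_nonneg (fun i _ => sq_nonneg (u i))).mp h i
      (Finset.mem_univ i)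
    exact pow_eq_zero_iff (by norm_num) |>.mp h2
  · intro h; simp [h, l2]

lemma sq_l2_combo {d : ℕ} (c e : ℝ) (p q : Fin d → ℝ) :
    (l2 (c • p + e • q))^2 = c^2*(l2 p)^2 + 2*c*e*(dotp p q) + e^2*(l2 q)^2 := by
  simp only [sq_l2, dotp, Pi.add_apply, Pi.smul_apply, smul_eq_mul, Finset.mul_sum,
    ← Finset.sum_add_distrib]
  exact Finset.sum_congr rfl (fun i _ => by ring)

lemma restricted_orthogonality {m n q : ℕ} {Φ : Matrix (Fin m) (Fin n) ℝ} {δ : ℝ}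
    (hδ : 0 ≤ δ) (hRIP : RIP Φ q δ) (u v : Fin n → ℝ)
    (hdisj : ∀ i, u i = 0 ∨ v i = 0)
    (hcard : (Function.support u).ncard + (Function.support v).ncard ≤ q) :
    |dotp (Φ.mulVec u) (Φ.mulVec v)| ≤ δ * l2 u * l2 v := by
  rcases eq_or_lt_of_le (l2_nonneg u) with h0 | ha
  · rw [l2_eq_zero_iff.mp h0.symm]
    simp only [Matrix.mulVec_zero, dotp, Pi.zero_apply, zero_mul, mul_zero,
      Finset.sum_const_zero, abs_zero]
    exact mul_nonneg (mul_nonneg hδ (l2_nonneg _)) (l2_nonneg _)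
  rcases eq_or_lt_of_le (l2_nonneg v) with h0 | hb
  · rw [l2_eq_zero_iff.mp h0.symm]
    simp only [Matrix.mulVec_zero, dotp, Pi.zero_apply, zero_mul, mul_zero,
      Finset.sum_const_zero, abs_zero]
    exact mul_nonneg (mul_nonneg hδ (l2_nonneg _)) (l2_nonneg _)
  set a := l2 u with hadef
  set b := l2 v with hbdef
  have huv0 : dotp u v = 0 := by
    apply Finset.sum_eq_zero
    intro i _
    rcases hdisj i with h | h <;> simp [h]
  -- supports
  have hsupp : ∀ (c e : ℝ), (Function.support (c • u + e • v)).ncard ≤ q := by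
    intro c e
    have hsub : Function.support (c • u + e • v) ⊆
        Function.support u ∪ Function.support v :=
      (Function.support_add _ _).trans
        (Set.union_subset_union (Function.support_const_smul_subset c u)
          (Function.support_const_smul_subset e v))
    exact le_trans (le_trans (Set.ncard_le_ncard hsub (Set.toFinite _))
      (Set.ncard_union_le _ _)) hcard
  have key : ∀ (c e : ℝ), Φ.mulVec (c • u + e • v) = c • Φ.mulVec u + e • Φ.mulVec v := by
    intro c e
    rw [Matrix.mulVec_add, Matrix.mulVec_smul, Matrix.mulVec_smul]
  have h1 := hRIP (b • u + a • v) (hsupp b a)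
  have h2 := hRIP (b • u + (-a) • v) (hsupp b (-a))
  rw [key, sq_l2_combo, sq_l2_combo, huv0] at h1
  rw [key, sq_l2_combo, sq_l2_combo, huv0] at h2
  set P := (l2 (Φ.mulVec u))^2
  set Q := (l2 (Φ.mulVec v))^2
  set D := dotp (Φ.mulVec u) (Φ.mulVec v)
  rw [abs_le]
  constructor <;> nlinarith [h1.1, h1.2, h2.1, h2.2, mul_pos ha hb, sq_nonneg a, sq_nonneg b]

lemma restr_union {n : ℕ} {S S' : Finset (Fin n)} (hd : Disjoint S S') (u : Fin n → ℝ) :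
    restr (S ∪ S') u = restr S u + restr S' u := by
  funext i
  simp only [restr, Pi.add_apply, Finset.mem_union]
  by_cases h1 : i ∈ S
  · have h2 : i ∉ S' := Finset.disjoint_left.mp hd h1
    simp [h1, h2]
  · by_cases h2 : i ∈ S' <;> simp [h1, h2]

lemma mulVec_sum {m n : ℕ} (Φ : Matrix (Fin m) (Fin n) ℝ) {ι : Type*} (S : Finset ι)
    (f : ι → Fin n → ℝ) :
    Φ.mulVec (∑ j ∈ S, f j) = ∑ j ∈ S, Φ.mulVec (f j) := by
  have := map_sum (Matrix.mulVecLin Φ) f S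
  simp only [Matrix.mulVecLin_apply] at this
  exact this

lemma dotp_add_right {d : ℕ} (u v w : Fin d → ℝ) :
    dotp u (v + w) = dotp u v + dotp u w := by
  simp only [dotp, Pi.add_apply, ← Finset.sum_add_distrib]
  exact Finset.sum_congr rfl (fun i _ => by ring)

section
variable {n k : ℕ} (h : Fin n → ℝ) (W : Finset (Fin n))

/-- Block decomposition of `W` by decreasing magnitude of `h`, blocks of size `k`. -/
lemma exists_blocks (hk : 1 ≤ k) :
    ∃ (B : ℕ → Finset (Fin n)) (M : ℕ),
      (∀ j, B j ⊆ W) ∧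
      (∀ j j', j ≠ j' → Disjoint (B j) (B j')) ∧
      (∀ i, (if i ∈ W then h i else 0) = ∑ j ∈ Finset.range (M+1),
          (if i ∈ B j then h i else 0)) ∧
      (∀ j, (B j).card ≤ k) ∧
      (∑ j ∈ Finset.Icc 1 M, Real.sqrt (∑ i ∈ B j, (h i)^2)) ≤
        (Real.sqrt k)⁻¹ * ∑ i ∈ W, |h i| := by
  classical
  set le : Fin n → Fin n → Bool := fun a b => decide (|h b| ≤ |h a|) with hle
  set l : List (Fin n) := W.toList.mergeSort le with hl
  have hperm : l.Perm W.toList := List.mergeSort_perm _ _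
  have hnodup : l.Nodup := hperm.nodup_iff.mpr W.nodup_toList
  have hmem : ∀ i, i ∈ l ↔ i ∈ W := fun i => hperm.mem_iff.trans Finset.mem_toList
  have hsorted : l.Pairwise (fun a b => |h b| ≤ |h a|) := by
    have := List.pairwise_mergeSort (le := le)
      (fun a b c hab hbc => by
        simp only [hle, decide_eq_true_eq] at *; exact le_trans hbc hab)
      (fun a b => by
        simp only [hle, Bool.or_eq_true, decide_eq_true_eq]; exact le_total _ _)
      W.toList
    rw [← hl] at this
    exact this.imp (fun {a b} hab => by simpa [hle] using hab)
  set N := l.length with hN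
  set idx : Fin n → ℕ := fun i => l.idxOf i with hidx
  have hidxlt : ∀ i ∈ W, idx i < N := fun i hi =>
    List.idxOf_lt_length_iff.mpr ((hmem i).mpr hi)
  have hgetidx : ∀ (i : Fin n) (hi : i ∈ W), l.get ⟨idx i, hidxlt i hi⟩ = i := fun i hi =>
    List.idxOf_get _
  set g : ℕ → ℝ := fun p => if hp : p < N then h (l.get ⟨p, hp⟩) else 0 with hg
  have hganti : ∀ p q : ℕ, p ≤ q → |g q| ≤ |g p| := by
    intro p q hpq
    by_cases hq : q < N
    · have hp : p < N := lt_of_le_of_lt hpq hq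
      simp only [hg, dif_pos hp, dif_pos hq]
      rcases eq_or_lt_of_le hpq with rfl | hlt
      · exact le_rfl
      · exact List.pairwise_iff_get.mp hsorted ⟨p, hp⟩ ⟨q, hq⟩ hlt
    · simp only [hg, dif_neg hq]
      simp [abs_nonneg]
  have hgidx : ∀ (i : Fin n), i ∈ W → g (idx i) = h i := by
    intro i hi
    simp only [hg, dif_pos (hidxlt i hi)]
    rw [hgetidx i hi]
  set B : ℕ → Finset (Fin n) := fun j => W.filter (fun i => idx i / k = j) with hB
  set P : ℕ → Finset ℕ := fun j => (Finset.range N).filter (fun p => p / k = j) with hP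
  -- the bridge between index-side and W-side sums
  have bridge : ∀ (F : ℝ → ℝ) (j : ℕ), ∑ i ∈ B j, F (h i) = ∑ p ∈ P j, F (g p) := by
    intro F j
    refine Finset.sum_bij' (fun i _ => idx i) (fun p hp => l.get ⟨p, ?_⟩) ?_ ?_ ?_ ?_ ?_
    · simp only [hP, Finset.mem_filter, Finset.mem_range] at hp
      exact hp.1
    · intro i hi
      simp only [hB, Finset.mem_filter] at hi
      simp only [hP, Finset.mem_filter, Finset.mem_range]
      exact ⟨hidxlt i hi.1, hi.2⟩
    · intro p hp
      simp only [hP, Finset.mem_filter, Finset.mem_range] at hp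
      have hmem' : l.get ⟨p, hp.1⟩ ∈ W := (hmem _).mp (l.get_mem _)
      simp only [hB, Finset.mem_filter]
      refine ⟨hmem', ?_⟩
      rw [show idx (l.get ⟨p, hp.1⟩) = p from List.get_idxOf hnodup _]
      exact hp.2
    · intro i hi
      simp only [hB, Finset.mem_filter] at hi
      exact hgetidx i hi.1
    · intro p hp
      exact List.get_idxOf hnodup _
    · intro i hi
      simp only [hB, Finset.mem_filter] at hi
      rw [hgidx i hi.1]
  have bridgeW : ∀ (F : ℝ → ℝ), ∑ i ∈ W, F (h i) = ∑ p ∈ Finset.range N, F (g p) := by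
    intro F
    refine Finset.sum_bij' (fun i _ => idx i) (fun p hp => l.get ⟨p, ?_⟩) ?_ ?_ ?_ ?_ ?_
    · simpa using hp
    · intro i hi
      simp only [Finset.mem_range]
      exact hidxlt i hi
    · intro p hp
      exact (hmem _).mp (l.get_mem _)
    · intro i hi
      exact hgetidx i hi
    · intro p hp
      exact List.get_idxOf hnodup _
    · intro i hi
      rw [hgidx i hi]
  -- index blocks are intervals
  have hPsub : ∀ j, P j ⊆ Finset.Ico (j*k) ((j+1)*k) := by
    intro j p hp
    simp only [hP, Finset.mem_filter, Finset.mem_range] at hp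
    have h1 := Nat.div_add_mod p k
    have h2 : p % k < k := Nat.mod_lt p (by omega)
    rw [hp.2] at h1
    have h3 : (j+1)*k = k*j + k := by ring
    have h4 : j*k = k*j := by ring
    rw [Finset.mem_Ico]
    omega
  have hPcard : ∀ j, (P j).card ≤ k := by
    intro j
    refine le_trans (Finset.card_le_card (hPsub j)) ?_
    rw [Nat.card_Ico]
    have h3 : (j+1)*k = j*k + k := by ring
    omega
  -- main tail estimate, block j vs block (j-1)
  have tail_j : ∀ j : ℕ, 1 ≤ j →
      Real.sqrt (∑ p ∈ P j, (g p)^2) ≤ (Real.sqrt k)⁻¹ * ∑ p ∈ P (j-1), |g p| := by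
    intro j hj
    set S := ∑ p ∈ P (j-1), |g p| with hS
    have hSnn : 0 ≤ S := Finset.sum_nonneg (fun p _ => abs_nonneg _)
    rcases Finset.eq_empty_or_nonempty (P j) with hemp | ⟨p₀, hp₀⟩
    · rw [hemp]
      simp only [Finset.sum_empty, Real.sqrt_zero]
      positivity
    · -- P (j-1) is the full interval
      simp only [hP, Finset.mem_filter, Finset.mem_range] at hp₀
      have hjk : j * k ≤ p₀ := by
        have h1 := Nat.div_add_mod p₀ k
        have h2 : p₀ % k < k := Nat.mod_lt p₀ (by omega)
        rw [hp₀.2] at h1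
        have h4 : j*k = k*j := by ring
        omega
      have hPfull : Finset.Ico ((j-1)*k) (j*k) ⊆ P (j-1) := by
        intro q hq
        rw [Finset.mem_Ico] at hq
        simp only [hP, Finset.mem_filter, Finset.mem_range]
        have h4 : ((j-1)+1)*k = j * k := by
          have : (j-1)+1 = j := by omega
          rw [this]
        constructor
        · omega
        · exact Nat.div_eq_of_lt_le hq.1 (by omega)
      have hPfullcard : k ≤ (P (j-1)).card := by
        refine le_trans ?_ (Finset.card_le_card hPfull)
        rw [Nat.card_Ico]
        have h4 : ((j-1)+1)*k = j * k := by
          have : (j-1)+1 = j := by omega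
          rw [this]
        have h5 : ((j-1)+1)*k = (j-1)*k + k := by ring
        omega
      -- every entry of block j is dominated by the average of block (j-1)
      have hdom : ∀ p ∈ P j, (k:ℝ) * |g p| ≤ S := by
        intro p hp
        have hplow : j * k ≤ p := by
          simp only [hP, Finset.mem_filter, Finset.mem_range] at hp
          have h1 := Nat.div_add_mod p k
          have h2 : p % k < k := Nat.mod_lt p (by omega)
          rw [hp.2] at h1
          have h4 : j*k = k*j := by ring
          omega
        have hdom1 : ∀ q ∈ P (j-1), |g p| ≤ |g q| := by
          intro q hq
          have hq' := hPsub (j-1) hq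
          rw [Finset.mem_Ico] at hq'
          refine hganti q p ?_
          have h4 : ((j-1)+1)*k = j * k := by
            have : (j-1)+1 = j := by omega
            rw [this]
          omega
        calc (k:ℝ) * |g p| ≤ ((P (j-1)).card : ℝ) * |g p| := by
              have : (k:ℝ) ≤ ((P (j-1)).card : ℝ) := by exact_mod_cast hPfullcard
              have := abs_nonneg (g p)
              nlinarith
          _ ≤ S := by
              rw [hS]
              exact Finset.card_nsmul_le_sum (P (j-1)) _ _ hdom1 |>.trans_eq' (by
                simp [nsmul_eq_mul])
      -- conclude
      have hsum : ∑ p ∈ P j, (g p)^2 ≤ ((Real.sqrt k)⁻¹ * S)^2 := by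
        have hkpos : (0:ℝ) < k := by exact_mod_cast (by omega : 0 < k)
        have hbound : ∀ p ∈ P j, (g p)^2 ≤ ((k:ℝ)⁻¹ * S)^2 := by
          intro p hp
          have h1 := hdom p hp
          have h2 := abs_nonneg (g p)
          have : |g p| ≤ (k:ℝ)⁻¹ * S := by
            rw [inv_mul_eq_div, le_div_iff₀ hkpos]
            linarith
          calc (g p)^2 = |g p|^2 := (sq_abs _).symm
            _ ≤ ((k:ℝ)⁻¹ * S)^2 := by nlinarith
        calc ∑ p ∈ P j, (g p)^2 ≤ ∑ _p ∈ P j, ((k:ℝ)⁻¹ * S)^2 :=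
              Finset.sum_le_sum hbound
          _ = ((P j).card : ℝ) * ((k:ℝ)⁻¹ * S)^2 := by
              rw [Finset.sum_const, nsmul_eq_mul]
          _ ≤ (k:ℝ) * ((k:ℝ)⁻¹ * S)^2 := by
              have : ((P j).card : ℝ) ≤ (k:ℝ) := by exact_mod_cast hPcard j
              nlinarith [sq_nonneg ((k:ℝ)⁻¹ * S)]
          _ = ((Real.sqrt k)⁻¹ * S)^2 := by
              have hsq : ((Real.sqrt (k:ℝ))⁻¹)^2 = (k:ℝ)⁻¹ := by
                rw [← Real.sqrt_inv]
                exact Real.sq_sqrt (by positivity)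
              rw [mul_pow, mul_pow, hsq]
              have hk0 : (k:ℝ) ≠ 0 := ne_of_gt hkpos
              field_simp
      refine le_trans (Real.sqrt_le_sqrt hsum) ?_
      rw [Real.sqrt_sq (by positivity)]
  refine ⟨B, N, fun j => Finset.filter_subset _ _, ?_, ?_, ?_, ?_⟩
  · -- disjointness
    intro j j' hjj'
    rw [Finset.disjoint_left]
    intro i hi hi'
    simp only [hB, Finset.mem_filter] at hi hi'
    exact hjj' (hi.2 ▸ hi'.2)
  · -- partition of unity
    intro i
    by_cases hi : i ∈ W
    · rw [if_pos hi]
      have hmem' : ∀ j, i ∈ B j ↔ idx i / k = j := by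
        intro j
        simp only [hB, Finset.mem_filter]
        exact ⟨fun hh => hh.2, fun hh => ⟨hi, hh⟩⟩
      have e1 : ∑ j ∈ Finset.range (N+1), (if i ∈ B j then h i else 0) =
          ∑ j ∈ Finset.range (N+1), (if idx i / k = j then h i else 0) :=
        Finset.sum_congr rfl (fun j _ => if_congr (hmem' j) rfl rfl)
      rw [e1, Finset.sum_ite_eq, if_pos]
      rw [Finset.mem_range]
      have := Nat.div_le_self (idx i) k
      have := hidxlt i hi
      omega
    · rw [if_neg hi]
      refine (Finset.sum_eq_zero (fun j _ => ?_)).symm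
      rw [if_neg]
      intro hij
      exact hi (Finset.filter_subset _ _ hij)
  · -- card of blocks
    intro j
    have hb := bridge (fun _ => (1:ℝ)) j
    simp only [Finset.sum_const, nsmul_eq_mul, mul_one] at hb
    have : (B j).card = (P j).card := by exact_mod_cast hb
    rw [this]
    exact hPcard j
  · -- the tail sum bound
    have step1 : ∀ j ∈ Finset.Icc 1 N, Real.sqrt (∑ i ∈ B j, (h i)^2) ≤
        (Real.sqrt k)⁻¹ * ∑ p ∈ P (j-1), |g p| := by
      intro j hj
      rw [Finset.mem_Icc] at hj
      rw [bridge (fun t => t^2) j]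
      exact tail_j j hj.1
    refine le_trans (Finset.sum_le_sum step1) ?_
    rw [← Finset.mul_sum]
    have step2 : ∑ j ∈ Finset.Icc 1 N, ∑ p ∈ P (j-1), |g p| =
        ∑ j ∈ Finset.range N, ∑ p ∈ P j, |g p| := by
      refine Finset.sum_bij' (fun j _ => j - 1) (fun j _ => j + 1) ?_ ?_ ?_ ?_ ?_ <;>
        intro j hj <;>
        simp only [Finset.mem_Icc, Finset.mem_range] at * <;> omega
    have step3 : ∑ j ∈ Finset.range N, ∑ p ∈ P j, |g p| ≤
        ∑ j ∈ Finset.range (N+1), ∑ p ∈ P j, |g p| := by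
      refine Finset.sum_le_sum_of_subset_of_nonneg
        (Finset.range_subset_range.mpr (by omega)) ?_
      intro j _ _
      exact Finset.sum_nonneg (fun p _ => abs_nonneg _)
    have step4 : ∑ j ∈ Finset.range (N+1), ∑ p ∈ P j, |g p| =
        ∑ p ∈ Finset.range N, |g p| := by
      refine Finset.sum_fiberwise_of_maps_to ?_ _
      intro p hp
      rw [Finset.mem_range] at *
      have := Nat.div_le_self p k
      omega
    have step5 : ∑ p ∈ Finset.range N, |g p| = ∑ i ∈ W, |h i| :=
      (bridgeW (fun t => |t|)).symm
    have hsk : 0 ≤ (Real.sqrt k)⁻¹ := by positivity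
    calc (Real.sqrt k)⁻¹ * ∑ j ∈ Finset.Icc 1 N, ∑ p ∈ P (j-1), |g p|
        = (Real.sqrt k)⁻¹ * ∑ j ∈ Finset.range N, ∑ p ∈ P j, |g p| := by rw [step2]
      _ ≤ (Real.sqrt k)⁻¹ * ∑ j ∈ Finset.range (N+1), ∑ p ∈ P j, |g p| := by
          exact mul_le_mul_of_nonneg_left step3 hsk
      _ = (Real.sqrt k)⁻¹ * ∑ i ∈ W, |h i| := by rw [step4, step5]
end

set_option maxHeartbeats 1000000 in
/-- **iBPDN stability under the single RIP condition `δ_{s+2k} < √2 − 1`.** -/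
theorem ibpdn_stability_single_delta
    {m n : ℕ} (Φ : Matrix (Fin m) (Fin n) ℝ)
    (T : Finset (Fin n)) (s k : ℕ) (hs : T.card = s) (hk : 1 ≤ k)
    (δ : ℝ) (hδ : δ ∈ Set.Ioo (0 : ℝ) (Real.sqrt 2 - 1))
    (hRIP : RIP Φ (s + 2 * k) δ)
    (x : Fin n → ℝ) (ε : ℝ) (hε : 0 ≤ ε)
    (nse : Fin m → ℝ) (hnse : l2 nse ≤ ε)
    (y : Fin m → ℝ) (hy : y = Φ.mulVec x + nse)
    (xstar : Fin n → ℝ) (hsol : solvesIBPDN Φ y ε T xstar)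
    (r : Fin n → ℝ) (hr : r = x - restr T x)
    (T₀ : Finset (Fin n)) (hT₀card : T₀.card = k) (hT₀ : isLargest r T₀) :
    l2 (x - xstar) ≤
      (4 * Real.sqrt (1 + δ) / (1 - δ - Real.sqrt 2 * δ)) * ε
        + (2 * (1 + Real.sqrt 2 * δ - δ) / (1 - δ - Real.sqrt 2 * δ)) *
            ((Real.sqrt k)⁻¹ * l1 (r - restr T₀ r)) := by
  classical
  obtain ⟨hδ0, hδ1⟩ := hδ
  have hs2 : Real.sqrt 2 ^ 2 = 2 := Real.sq_sqrt (by norm_num)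
  have hs2pos : 0 < Real.sqrt 2 := Real.sqrt_pos.mpr (by norm_num)
  have hδlt1 : δ < 1 := by nlinarith
  have hP : 0 < 1 - δ - Real.sqrt 2 * δ := by nlinarith
  set P := 1 - δ - Real.sqrt 2 * δ with hPdef
  set h : Fin n → ℝ := x - xstar with hh
  have hxsub : ∀ i, xstar i = x i - h i := fun i => by simp [hh]
  -- feasibility of x
  have hxfeas : l2 (y - Φ.mulVec x) ≤ ε := by
    rw [hy, add_sub_cancel_left]
    exact hnse
  have hcone0 : l1 (restr Tᶜ xstar) ≤ l1 (restr Tᶜ x) := hsol.2 x hxfeas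
  -- the image error is at most 2ε
  have hΦh : l2 (Φ.mulVec h) ≤ 2 * ε := by
    have e1 : Φ.mulVec h = (y - Φ.mulVec xstar) - (y - Φ.mulVec x) := by
      rw [hh, Matrix.mulVec_sub]
      abel
    rw [e1]
    have := l2_sub_le (y - Φ.mulVec xstar) (y - Φ.mulVec x)
    linarith [hsol.1, hxfeas, this]
  -- facts about r
  have hxr : ∀ i, i ∉ T → x i = r i := by
    intro i hi
    rw [hr]
    simp [restr, hi]
  set e₀ := l1 (r - restr T₀ r) with he₀def
  have he₀eq : e₀ = ∑ i ∈ T₀ᶜ, |r i| := by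
    have : r - restr T₀ r = restr T₀ᶜ r := by
      funext i
      by_cases hi : i ∈ T₀ <;> simp [restr, hi]
    rw [he₀def, this, l1_restr]
  have he₀nn : 0 ≤ e₀ := by
    rw [he₀eq]
    exact Finset.sum_nonneg fun i _ => abs_nonneg _
  -- block decomposition
  set W : Finset (Fin n) := (T ∪ T₀)ᶜ with hWdef
  obtain ⟨B, M, hBsub, hBdisj, hBpart, hBcard, hBtail⟩ := exists_blocks h W hk
  -- cone constraint
  have hcone : ∑ i ∈ W, |h i| ≤ ∑ i ∈ T₀, |h i| + 2 * e₀ := by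
    have lhs_eq : l1 (restr Tᶜ xstar) = ∑ i ∈ Tᶜ, |r i - h i| := by
      rw [l1_restr]
      refine Finset.sum_congr rfl fun i hi => ?_
      rw [hxsub i, hxr i (Finset.mem_compl.mp hi)]
    have rhs_eq : l1 (restr Tᶜ x) = ∑ i ∈ Tᶜ, |r i| := by
      rw [l1_restr]
      exact Finset.sum_congr rfl fun i hi => by rw [hxr i (Finset.mem_compl.mp hi)]
    have hWfilter : Tᶜ.filter (fun i => i ∉ T₀) = W := by
      ext i
      simp only [Finset.mem_filter, Finset.mem_compl, hWdef, Finset.mem_union]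
      tauto
    have split : ∀ (f : Fin n → ℝ),
        ∑ i ∈ Tᶜ, f i = ∑ i ∈ Tᶜ.filter (fun i => i ∈ T₀), f i + ∑ i ∈ W, f i := by
      intro f
      rw [← hWfilter]
      exact (Finset.sum_filter_add_sum_filter_not Tᶜ (fun i => i ∈ T₀) f).symm
    have c1 : ∑ i ∈ Tᶜ.filter (fun i => i ∈ T₀), (|r i| - |h i|)
        ≤ ∑ i ∈ Tᶜ.filter (fun i => i ∈ T₀), |r i - h i| :=
      Finset.sum_le_sum fun i _ => abs_sub_abs_le_abs_sub _ _
    have c2 : ∑ i ∈ W, (|h i| - |r i|) ≤ ∑ i ∈ W, |r i - h i| := by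
      refine Finset.sum_le_sum fun i _ => ?_
      rw [abs_sub_comm]
      exact abs_sub_abs_le_abs_sub _ _
    have c3 : ∑ i ∈ Tᶜ.filter (fun i => i ∈ T₀), |h i| ≤ ∑ i ∈ T₀, |h i| :=
      Finset.sum_le_sum_of_subset_of_nonneg
        (fun i hi => (Finset.mem_filter.mp hi).2) (fun i _ _ => abs_nonneg _)
    have c4 : ∑ i ∈ W, |r i| ≤ e₀ := by
      rw [he₀eq]
      refine Finset.sum_le_sum_of_subset_of_nonneg ?_ (fun i _ _ => abs_nonneg _)
      intro i hi
      simp only [hWdef, Finset.mem_compl, Finset.mem_union] at hi ⊢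
      tauto
    have hsum1 := split (fun i => |r i - h i|)
    have hsum2 := split (fun i => |r i|)
    rw [lhs_eq, hsum1, rhs_eq, hsum2] at hcone0
    rw [Finset.sum_sub_distrib] at c1 c2
    linarith
  -- the key sets
  set A : Finset (Fin n) := T ∪ T₀ with hAdef
  set Ω : Finset (Fin n) := A ∪ B 0 with hΩdef
  have hWA : W = Aᶜ := rfl
  have hdisjAB : ∀ j, Disjoint A (B j) := by
    intro j
    rw [Finset.disjoint_left]
    intro i hi hij
    have := hBsub j hij
    rw [hWA, Finset.mem_compl] at this
    exact this hi
  have hAcard : A.card ≤ s + k := by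
    calc A.card ≤ T.card + T₀.card := Finset.card_union_le _ _
      _ = s + k := by rw [hs, hT₀card]
  have hΩcard : Ω.card ≤ s + 2 * k := by
    calc Ω.card ≤ A.card + (B 0).card := Finset.card_union_le _ _
      _ ≤ (s + k) + k := add_le_add hAcard (hBcard 0)
      _ = s + 2 * k := by omega
  -- decomposition of h
  have hdecomp : h = restr Ω h + ∑ j ∈ Finset.Icc 1 M, restr (B j) h := by
    funext i
    have hWpart : restr A h i + restr W h i = h i := by
      by_cases hi : i ∈ A
      · have : i ∉ W := by rw [hWA]; simp [hi]
        simp [restr, hi, this]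
      · have : i ∈ W := by rw [hWA]; simp [hi]
        simp [restr, hi, this]
    have hrange : Finset.range (M+1) = insert 0 (Finset.Icc 1 M) := by
      ext j
      simp only [Finset.mem_range, Finset.mem_insert, Finset.mem_Icc]
      omega
    have hBp := hBpart i
    rw [hrange, Finset.sum_insert (by simp)] at hBp
    have hrw : restr W h i = restr (B 0) h i + ∑ j ∈ Finset.Icc 1 M, restr (B j) h i := by
      simpa [restr] using hBp
    have hΩr : restr Ω h i = restr A h i + restr (B 0) h i := by
      rw [hΩdef, restr_union (hdisjAB 0)]
      rfl
    simp only [Pi.add_apply, Finset.sum_apply]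
    rw [hΩr]
    have := hWpart
    rw [hrw] at this
    linarith
  set HΩ := l2 (restr Ω h) with hHΩdef
  set tl := ∑ j ∈ Finset.Icc 1 M, l2 (restr (B j) h) with htldef
  have hHΩnn : 0 ≤ HΩ := l2_nonneg _
  have hsqk : (0:ℝ) < Real.sqrt k := Real.sqrt_pos.mpr (by exact_mod_cast (by omega : 0 < k))
  set ee := (Real.sqrt k)⁻¹ * e₀ with heedef
  have heenn : 0 ≤ ee := mul_nonneg (by positivity) he₀nn
  -- tail bound
  have htail : tl ≤ HΩ + 2 * ee := by
    have t1 : tl ≤ (Real.sqrt k)⁻¹ * ∑ i ∈ W, |h i| := by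
      rw [htldef]
      refine le_trans (le_of_eq (Finset.sum_congr rfl fun j _ => l2_restr_eq_sqrt _ _)) hBtail
    have t2 : (Real.sqrt k)⁻¹ * ∑ i ∈ W, |h i|
        ≤ (Real.sqrt k)⁻¹ * (∑ i ∈ T₀, |h i| + 2 * e₀) :=
      mul_le_mul_of_nonneg_left hcone (by positivity)
    have t3 : ∑ i ∈ T₀, |h i| ≤ Real.sqrt k * l2 (restr T₀ h) := by
      have := l1_le_sqrt_card_l2 T₀ h
      rwa [hT₀card] at this
    have t4 : l2 (restr T₀ h) ≤ HΩ := by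
      rw [hHΩdef]
      refine l2_restr_mono ?_ h
      intro i hi
      rw [hΩdef, hAdef]
      simp [Finset.mem_union, hi]
    have t5 : (Real.sqrt k)⁻¹ * (Real.sqrt k * l2 (restr T₀ h)) = l2 (restr T₀ h) := by
      rw [← mul_assoc, inv_mul_cancel₀ (ne_of_gt hsqk), one_mul]
    calc tl ≤ (Real.sqrt k)⁻¹ * (∑ i ∈ T₀, |h i| + 2 * e₀) := le_trans t1 t2
      _ = (Real.sqrt k)⁻¹ * ∑ i ∈ T₀, |h i| + 2 * ee := by rw [heedef]; ring
      _ ≤ (Real.sqrt k)⁻¹ * (Real.sqrt k * l2 (restr T₀ h)) + 2 * ee := by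
          have := mul_le_mul_of_nonneg_left t3 (le_of_lt (inv_pos.mpr hsqk))
          linarith
      _ = l2 (restr T₀ h) + 2 * ee := by rw [t5]
      _ ≤ HΩ + 2 * ee := by linarith
  -- RIP on restr Ω h
  have hsuppΩ : (Function.support (restr Ω h)).ncard ≤ s + 2 * k :=
    le_trans (ncard_support_restr Ω h) hΩcard
  have hRIPΩ := hRIP (restr Ω h) hsuppΩ
  -- the inner product decomposition
  have himg : Φ.mulVec h = Φ.mulVec (restr Ω h)
      + ∑ j ∈ Finset.Icc 1 M, Φ.mulVec (restr (B j) h) := by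
    conv_lhs => rw [hdecomp]
    rw [Matrix.mulVec_add, mulVec_sum]
  have hcross : ∀ j ∈ Finset.Icc 1 M,
      -(dotp (Φ.mulVec (restr Ω h)) (Φ.mulVec (restr (B j) h)))
        ≤ Real.sqrt 2 * δ * HΩ * l2 (restr (B j) h) := by
    intro j hj
    rw [Finset.mem_Icc] at hj
    set vj := restr (B j) h with hvjdef
    have hsplitΩ : restr Ω h = restr A h + restr (B 0) h := by
      rw [hΩdef, restr_union (hdisjAB 0)]
    have hmul : Φ.mulVec (restr Ω h) = Φ.mulVec (restr A h) + Φ.mulVec (restr (B 0) h) := by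
      rw [hsplitΩ, Matrix.mulVec_add]
    have hdot1 : |dotp (Φ.mulVec (restr A h)) (Φ.mulVec vj)| ≤ δ * l2 (restr A h) * l2 vj := by
      refine restricted_orthogonality (le_of_lt hδ0) hRIP _ _ ?_ ?_
      · intro i
        by_cases hi : i ∈ A
        · right
          have : i ∉ B j := Finset.disjoint_left.mp (hdisjAB j) hi
          simp [hvjdef, restr, this]
        · left; simp [restr, hi]
      · calc (Function.support (restr A h)).ncard + (Function.support vj).ncard
            ≤ A.card + (B j).card :=
              add_le_add (ncard_support_restr _ _) (ncard_support_restr _ _)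
          _ ≤ (s + k) + k := add_le_add hAcard (hBcard j)
          _ ≤ s + 2 * k := by omega
    have hdot2 : |dotp (Φ.mulVec (restr (B 0) h)) (Φ.mulVec vj)|
        ≤ δ * l2 (restr (B 0) h) * l2 vj := by
      refine restricted_orthogonality (le_of_lt hδ0) hRIP _ _ ?_ ?_
      · intro i
        by_cases hi : i ∈ B 0
        · right
          have : i ∉ B j := Finset.disjoint_left.mp (hBdisj 0 j (by omega)) hi
          simp [hvjdef, restr, this]
        · left; simp [restr, hi]
      · calc (Function.support (restr (B 0) h)).ncard + (Function.support vj).ncard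
            ≤ (B 0).card + (B j).card :=
              add_le_add (ncard_support_restr _ _) (ncard_support_restr _ _)
          _ ≤ k + k := add_le_add (hBcard 0) (hBcard j)
          _ ≤ s + 2 * k := by omega
    -- l2 (restr A h) + l2 (restr (B 0) h) ≤ √2 * HΩ
    have hl2split : (l2 (restr A h))^2 + (l2 (restr (B 0) h))^2 = HΩ^2 := by
      rw [hHΩdef, sq_l2_restr, sq_l2_restr, sq_l2_restr, hΩdef,
        Finset.sum_union (hdisjAB 0)]
    have hsqrt2 : l2 (restr A h) + l2 (restr (B 0) h) ≤ Real.sqrt 2 * HΩ := by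
      have h1 := l2_nonneg (restr A h)
      have h2 := l2_nonneg (restr (B 0) h)
      refine le_of_sq_le_sq' ?_ (by linarith) (mul_nonneg (Real.sqrt_nonneg _) hHΩnn)
      nlinarith [sq_nonneg (l2 (restr A h) - l2 (restr (B 0) h))]
    have habs : -(dotp (Φ.mulVec (restr Ω h)) (Φ.mulVec vj))
        ≤ δ * l2 (restr A h) * l2 vj + δ * l2 (restr (B 0) h) * l2 vj := by
      rw [hmul, dotp_add_left]
      have h1 := (abs_le.mp hdot1).1
      have h2 := (abs_le.mp hdot2).1
      linarith
    have hvjnn := l2_nonneg vj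
    have hstep : δ * (l2 (restr A h) + l2 (restr (B 0) h)) * l2 vj
        ≤ δ * (Real.sqrt 2 * HΩ) * l2 vj := by
      refine mul_le_mul_of_nonneg_right (mul_le_mul_of_nonneg_left hsqrt2 (le_of_lt hδ0)) hvjnn
    have hexp : δ * (l2 (restr A h) + l2 (restr (B 0) h)) * l2 vj
        = δ * l2 (restr A h) * l2 vj + δ * l2 (restr (B 0) h) * l2 vj := by ring
    have hfin : δ * (Real.sqrt 2 * HΩ) * l2 vj = Real.sqrt 2 * δ * HΩ * l2 vj := by ring
    rw [← hfin]
    refine le_trans ?_ hstep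
    rw [hexp]
    exact habs
  -- main chain
  have hΦΩ : l2 (Φ.mulVec (restr Ω h)) ≤ Real.sqrt (1+δ) * HΩ := by
    refine le_of_sq_le_sq' ?_ (l2_nonneg _) (by positivity)
    have := hRIPΩ.2
    rw [mul_pow, Real.sq_sqrt (by linarith : (0:ℝ) ≤ 1 + δ)]
    exact this
  have hmain : (1 - δ) * HΩ^2 ≤ Real.sqrt (1+δ) * HΩ * (2*ε)
      + Real.sqrt 2 * δ * HΩ * tl := by
    have step0 : (1 - δ) * HΩ^2 ≤ (l2 (Φ.mulVec (restr Ω h)))^2 := hRIPΩ.1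
    have step1 : (l2 (Φ.mulVec (restr Ω h)))^2
        = dotp (Φ.mulVec (restr Ω h)) (Φ.mulVec h)
          - ∑ j ∈ Finset.Icc 1 M, dotp (Φ.mulVec (restr Ω h)) (Φ.mulVec (restr (B j) h)) := by
      rw [himg, dotp_add_right, dotp_sum_right, dotp_self]
      ring
    have step2 : dotp (Φ.mulVec (restr Ω h)) (Φ.mulVec h)
        ≤ Real.sqrt (1+δ) * HΩ * (2*ε) := by
      have h1 := (abs_le.mp (abs_dotp_le (Φ.mulVec (restr Ω h)) (Φ.mulVec h))).2
      have h2 : l2 (Φ.mulVec (restr Ω h)) * l2 (Φ.mulVec h)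
          ≤ (Real.sqrt (1+δ) * HΩ) * (2*ε) := by
        have hnn1 := l2_nonneg (Φ.mulVec (restr Ω h))
        have hnn2 := l2_nonneg (Φ.mulVec h)
        have hnn3 : 0 ≤ Real.sqrt (1+δ) * HΩ := by positivity
        nlinarith [hΦΩ, hΦh]
      linarith
    have step3 : -(∑ j ∈ Finset.Icc 1 M, dotp (Φ.mulVec (restr Ω h)) (Φ.mulVec (restr (B j) h)))
        ≤ Real.sqrt 2 * δ * HΩ * tl := by
      rw [← Finset.sum_neg_distrib, htldef, Finset.mul_sum]
      exact Finset.sum_le_sum hcross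
    linarith
  -- solve for HΩ
  have hHΩbound : P * HΩ ≤ 2 * Real.sqrt (1+δ) * ε + 2 * Real.sqrt 2 * δ * ee := by
    rcases eq_or_lt_of_le hHΩnn with h0 | hpos
    · rw [← h0, mul_zero]
      positivity
    · have htail' : Real.sqrt 2 * δ * HΩ * tl ≤ Real.sqrt 2 * δ * HΩ * (HΩ + 2*ee) := by
        refine mul_le_mul_of_nonneg_left htail ?_
        positivity
      have key : (1 - δ) * HΩ^2 ≤ Real.sqrt (1+δ) * HΩ * (2*ε)
          + Real.sqrt 2 * δ * HΩ * (HΩ + 2*ee) := by linarith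
      rw [hPdef]
      nlinarith [key, hpos]
  -- conclude
  have htri : l2 h ≤ 2 * HΩ + 2 * ee := by
    have h1 : l2 h ≤ HΩ + tl := by
      conv_lhs => rw [hdecomp]
      refine le_trans (l2_add_le _ _) ?_
      have := l2_sum_le (Finset.Icc 1 M) (fun j => restr (B j) h)
      rw [hHΩdef, htldef]
      linarith
    linarith
  have hfinal : P * l2 h ≤ 4 * Real.sqrt (1+δ) * ε + 2 * (1 + Real.sqrt 2 * δ - δ) * ee := by
    have s1 : P * l2 h ≤ P * (2 * HΩ + 2 * ee) := mul_le_mul_of_nonneg_left htri (le_of_lt hP)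
    have s2 : P * (2 * HΩ + 2 * ee) = 2 * (P * HΩ) + 2 * P * ee := by ring
    have s3 : 2 * (2 * Real.sqrt (1+δ) * ε + 2 * Real.sqrt 2 * δ * ee) + 2 * P * ee
        = 4 * Real.sqrt (1+δ) * ε + 2 * (1 + Real.sqrt 2 * δ - δ) * ee := by
      rw [hPdef]; ring
    nlinarith [hHΩbound]
  have hgoal : l2 h ≤ (4 * Real.sqrt (1 + δ) / P) * ε
      + (2 * (1 + Real.sqrt 2 * δ - δ) / P) * ee := by
    rw [div_mul_eq_mul_div, div_mul_eq_mul_div, ← add_div, le_div_iff₀ hP]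
    linarith [hfinal]
  exact hgoal
end

section
/- Let Φ ∈ ℝ^{m×n} satisfy the RIP of order l + l' with radius δ ∈ (0,1), and let u, v ∈ ℝⁿ have disjoint supports with #supp u ≤ l and #supp v ≤ l'. Then |⟨Φu, Φv⟩| ≤ δ·‖u‖₂·‖v‖₂. -/
open scoped BigOperators

lemma l2_sq {d : ℕ} (u : Fin d → ℝ) : l2 u ^ 2 = ∑ i, (u i) ^ 2 := by
  rw [l2, Real.sq_sqrt]; positivity

lemma l2_eq_zero {d : ℕ} {u : Fin d → ℝ} (h : l2 u = 0) : u = 0 := by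
  have hs : ∑ i, (u i) ^ 2 = 0 := by rw [← l2_sq, h]; ring
  funext i
  have := (Finset.sum_eq_zero_iff_of_nonneg (fun i _ => sq_nonneg (u i))).mp hs i (Finset.mem_univ i)
  have := pow_eq_zero_iff (n := 2) (by norm_num) |>.mp this
  simpa using this

lemma expand_sum {d : ℕ} (w z : Fin d → ℝ) :
    ∑ i, (w i + z i) ^ 2 = ∑ i, (w i) ^ 2 + 2 * ∑ i, w i * z i + ∑ i, (z i) ^ 2 := by
  rw [Finset.mul_sum, ← Finset.sum_add_distrib, ← Finset.sum_add_distrib]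
  exact Finset.sum_congr rfl (fun i _ => by ring)

lemma expand_sum_sub {d : ℕ} (w z : Fin d → ℝ) :
    ∑ i, (w i - z i) ^ 2 = ∑ i, (w i) ^ 2 - 2 * ∑ i, w i * z i + ∑ i, (z i) ^ 2 := by
  have := expand_sum w (-z)
  simp only [Pi.neg_apply] at this
  calc ∑ i, (w i - z i) ^ 2 = ∑ i, (w i + -z i) ^ 2 := by
        exact Finset.sum_congr rfl (fun i _ => by ring)
    _ = _ := by
        rw [this]
        have h1 : ∑ i, w i * -z i = -∑ i, w i * z i := by
          rw [← Finset.sum_neg_distrib]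
          exact Finset.sum_congr rfl (fun i _ => by ring)
        have h2 : ∑ i, (-z i) ^ 2 = ∑ i, (z i) ^ 2 := by
          exact Finset.sum_congr rfl (fun i _ => by ring)
        rw [h1, h2]; ring

lemma l2_smul_sq {d : ℕ} (c : ℝ) (u : Fin d → ℝ) : l2 (c • u) ^ 2 = c ^ 2 * (l2 u) ^ 2 := by
  simp [l2_sq, Finset.mul_sum, mul_pow]

lemma polar_bound {m n : ℕ} (Φ : Matrix (Fin m) (Fin n) ℝ) (q : ℕ) (δ : ℝ)
    (hRIP : RIP Φ q δ) (u v : Fin n → ℝ)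
    (hdisj : Disjoint (Function.support u) (Function.support v))
    (hcard : (Function.support u ∪ Function.support v).ncard ≤ q) :
    |∑ i, Φ.mulVec u i * Φ.mulVec v i| ≤ δ * (l2 u ^ 2 + l2 v ^ 2) / 2 := by
  set P := ∑ i, Φ.mulVec u i * Φ.mulVec v i with hP
  -- disjointness kills the cross term
  have huv0 : ∑ i, u i * v i = 0 := by
    apply Finset.sum_eq_zero
    intro i _
    by_cases h : u i = 0
    · simp [h]
    · have : i ∈ Function.support u := h
      have : i ∉ Function.support v := fun hv => Set.disjoint_left.mp hdisj this hv
      simp [Function.notMem_support.mp this]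
  have hAB : l2 (u + v) ^ 2 = l2 u ^ 2 + l2 v ^ 2 := by
    simp only [l2_sq, Pi.add_apply]
    rw [expand_sum, huv0]; ring
  have hAB' : l2 (u - v) ^ 2 = l2 u ^ 2 + l2 v ^ 2 := by
    simp only [l2_sq, Pi.sub_apply]
    rw [expand_sum_sub, huv0]; ring
  have hL : l2 (Φ.mulVec (u + v)) ^ 2
      = l2 (Φ.mulVec u) ^ 2 + 2 * P + l2 (Φ.mulVec v) ^ 2 := by
    rw [Matrix.mulVec_add]
    simp only [l2_sq, Pi.add_apply]
    rw [expand_sum]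
  have hL' : l2 (Φ.mulVec (u - v)) ^ 2
      = l2 (Φ.mulVec u) ^ 2 - 2 * P + l2 (Φ.mulVec v) ^ 2 := by
    rw [Matrix.mulVec_sub]
    simp only [l2_sq, Pi.sub_apply]
    rw [expand_sum_sub]
  have hsupp : (Function.support (u + v)).ncard ≤ q :=
    le_trans (Set.ncard_le_ncard (Function.support_add u v) (Set.toFinite _)) hcard
  have hsupp' : (Function.support (u - v)).ncard ≤ q :=
    le_trans (Set.ncard_le_ncard (Function.support_sub u v) (Set.toFinite _)) hcard
  obtain ⟨h1, h2⟩ := hRIP (u + v) hsupp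
  obtain ⟨h3, h4⟩ := hRIP (u - v) hsupp'
  rw [hAB, hL] at h1 h2
  rw [hAB', hL'] at h3 h4
  rw [abs_le]
  constructor <;> linarith

/-- **Near-orthogonality of images of disjointly supported sparse vectors
under a RIP matrix** (Candès' polarization-identity lemma). -/
theorem rip_inner_product_bound
    {m n : ℕ} (Φ : Matrix (Fin m) (Fin n) ℝ) (l l' : ℕ) (δ : ℝ)
    (hδ : δ ∈ Set.Ioo (0 : ℝ) 1) (hRIP : RIP Φ (l + l') δ)
    (u v : Fin n → ℝ)
    (hdisj : Disjoint (Function.support u) (Function.support v))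
    (hu : (Function.support u).ncard ≤ l) (hv : (Function.support v).ncard ≤ l') :
    |∑ i, Φ.mulVec u i * Φ.mulVec v i| ≤ δ * l2 u * l2 v := by
  obtain ⟨hδ0, hδ1⟩ := hδ
  by_cases ha : l2 u = 0
  · have h0 : u = 0 := l2_eq_zero ha
    rw [ha]
    simp [h0, Matrix.mulVec_zero]
  by_cases hb : l2 v = 0
  · have h0 : v = 0 := l2_eq_zero hb
    rw [hb]
    simp [h0, Matrix.mulVec_zero]
  have ha' : 0 < l2 u := lt_of_le_of_ne (Real.sqrt_nonneg _) (Ne.symm ha)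
  have hb' : 0 < l2 v := lt_of_le_of_ne (Real.sqrt_nonneg _) (Ne.symm hb)
  set a := l2 u
  set b := l2 v
  -- apply polarization bound to the rescaled vectors b • u and a • v
  have hsub1 : Function.support (b • u) ⊆ Function.support u :=
    Function.support_const_smul_subset b u
  have hsub2 : Function.support (a • v) ⊆ Function.support v :=
    Function.support_const_smul_subset a v
  have hdisj' : Disjoint (Function.support (b • u)) (Function.support (a • v)) :=
    Set.disjoint_of_subset hsub1 hsub2 hdisj
  have hcard : (Function.support (b • u) ∪ Function.support (a • v)).ncard ≤ l + l' := by
    calc (Function.support (b • u) ∪ Function.support (a • v)).ncard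
        ≤ (Function.support u ∪ Function.support v).ncard :=
          Set.ncard_le_ncard (Set.union_subset_union hsub1 hsub2) (Set.toFinite _)
      _ ≤ (Function.support u).ncard + (Function.support v).ncard :=
          Set.ncard_union_le _ _
      _ ≤ l + l' := Nat.add_le_add hu hv
  have key := polar_bound Φ (l + l') δ hRIP (b • u) (a • v) hdisj' hcard
  have hscale : ∑ i, Φ.mulVec (b • u) i * Φ.mulVec (a • v) i
      = (a * b) * ∑ i, Φ.mulVec u i * Φ.mulVec v i := by
    rw [Matrix.mulVec_smul, Matrix.mulVec_smul, Finset.mul_sum]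
    exact Finset.sum_congr rfl (fun i _ => by simp [smul_eq_mul]; ring)
  rw [hscale, l2_smul_sq, l2_smul_sq, abs_mul, abs_of_pos (mul_pos ha' hb')] at key
  have hab : 0 < a * b := mul_pos ha' hb'
  have key2 : a * b * |∑ i, Φ.mulVec u i * Φ.mulVec v i| ≤ a * b * (δ * a * b) := by
    calc a * b * |∑ i, Φ.mulVec u i * Φ.mulVec v i|
        ≤ δ * (b ^ 2 * a ^ 2 + a ^ 2 * b ^ 2) / 2 := key
      _ = a * b * (δ * a * b) := by ring
  exact (mul_le_mul_iff_right₀ hab).mp key2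
end
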